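/- Let n_e ∈ C²(ℝ) satisfy n_e(0) = 1, n_e'(0) = −1, and n_e'(Φ) < 0 for all Φ ∈ ℝ. Then there exist constants δ₀ > 0 and C > 0 such that the following holds. Let Φ_b > 0 and let Φ^s ∈ C¹([0,∞)) satisfy 0 ≤ Φ^s(x) ≤ Φ_b and |∂_xΦ^s(x)| ≤ Φ_b for all x ≥ 0; let n ∈ C¹([0,∞)) with n, n' ∈ L²(0,∞); and let φ ∈ C²([0,∞)) solve ∂_{xx}φ = n − (n_e(Φ^s + φ) − n_e(Φ^s)) on (0,∞) with φ(0) = 0, lim_{x→∞} φ(x) = 0 and φ, ∂_xφ ∈ L²(0,∞). If Φ_b + ( ∫₀^∞ (|n|² + |∂_x n|²) dx )^{1/2} ≤ δ₀, then ∂_{xx}φ is differentiable and ∫₀^∞ ( |φ|² + |∂_xφ|² + |∂_{xx}φ|² + |∂_{xxx}φ|² ) dx ≤ C ∫₀^∞ ( |n|² + |∂_x n|² ) dx. -/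

import Mathlib

open MeasureTheory Real Set Filter

private lemma limit_zero_of_integrable {f : ℝ → ℝ} {l : ℝ}
    (hf : Integrable f (volume.restrict (Set.Ioi (0:ℝ))))
    (hl : Tendsto f atTop (nhds l)) : l = 0 := by
  by_contra h
  have hl2 : 0 < |l| / 2 := by positivity
  have hev : ∀ᶠ x in atTop, |l| / 2 ≤ |f x| := by
    filter_upwards [hl.eventually (Metric.ball_mem_nhds l hl2)] with x hx
    have h1 : |f x - l| < |l| / 2 := by simpa [Real.dist_eq] using hx
    have h2 := abs_sub_abs_le_abs_sub l (f x)
    rw [abs_sub_comm] at h2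
    linarith
  obtain ⟨R, hR⟩ := hev.exists_forall_of_atTop
  set R' := max R 1 with hR'
  have hsub : Set.Ioi R' ⊆ Set.Ioi (0:ℝ) := fun x hx => lt_of_lt_of_le
    (lt_of_lt_of_le one_pos (le_max_right R 1)) (le_of_lt hx)
  have hint : IntegrableOn f (Set.Ioi R') volume := IntegrableOn.mono_set hf hsub
  have hconst : Integrable (fun _ : ℝ => |l| / 2) (volume.restrict (Set.Ioi R')) := by
    refine Integrable.mono hint aestronglyMeasurable_const ?_
    refine ae_restrict_of_forall_mem measurableSet_Ioi (fun x hx => ?_)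
    have := hR x (le_trans (le_max_left R 1) (le_of_lt hx))
    simpa [abs_of_nonneg (le_of_lt hl2)] using this
  rw [integrable_const_iff] at hconst
  rcases hconst with h0 | hfin
  · exact absurd h0 (by positivity)
  · have hfin := hfin.measure_univ_lt_top; rw [Measure.restrict_apply_univ, Real.volume_Ioi] at hfin
    exact absurd hfin (by simp)

private lemma slope_eq {F : ℝ → ℝ} (hF : Differentiable ℝ F) {a b : ℝ} (hab : a < b) :
    ∃ ξ ∈ Set.Ioo a b, F b - F a = deriv F ξ * (b - a) := by
  obtain ⟨c, hc, hc'⟩ := exists_hasDerivAt_eq_slope F (deriv F) hab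
    (hF.continuous.continuousOn) (fun x _ => (hF x).hasDerivAt)
  refine ⟨c, hc, ?_⟩
  rw [hc', div_mul_cancel₀]
  exact ne_of_gt (sub_pos.mpr hab)

private lemma mvt_abs {F : ℝ → ℝ} (hF : Differentiable ℝ F) {K a b : ℝ}
    (hK : ∀ s ∈ Set.Icc (-1:ℝ) 2, |deriv F s| ≤ K)
    (ha : a ∈ Set.Icc (-1:ℝ) 2) (hb : b ∈ Set.Icc (-1:ℝ) 2) :
    |F b - F a| ≤ K * |b - a| := by
  rcases lt_trichotomy a b with h | h | h
  · obtain ⟨ξ, hξ, he⟩ := slope_eq hF h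
    rw [he, abs_mul]
    exact mul_le_mul_of_nonneg_right
      (hK ξ ⟨le_trans ha.1 (le_of_lt hξ.1), le_trans (le_of_lt hξ.2) hb.2⟩) (abs_nonneg _)
  · simp [h]
  · obtain ⟨ξ, hξ, he⟩ := slope_eq hF h
    rw [abs_sub_comm, he, abs_mul, abs_sub_comm a b]
    exact mul_le_mul_of_nonneg_right
      (hK ξ ⟨le_trans hb.1 (le_of_lt hξ.1), le_trans (le_of_lt hξ.2) ha.2⟩) (abs_nonneg _)

private lemma mvt_lower {F : ℝ → ℝ} (hF : Differentiable ℝ F) {κ a t : ℝ}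
    (hκ : ∀ s ∈ Set.Icc (-1:ℝ) 2, deriv F s ≤ -κ)
    (ha : a ∈ Set.Icc (-1:ℝ) 2) (hat : a + t ∈ Set.Icc (-1:ℝ) 2) :
    (F (a + t) - F a) * t ≤ -κ * t^2 := by
  rcases lt_trichotomy t 0 with h | h | h
  · have hlt : a + t < a := by linarith
    obtain ⟨ξ, hξ, he⟩ := slope_eq hF hlt
    have hξm : ξ ∈ Set.Icc (-1:ℝ) 2 :=
      ⟨le_trans hat.1 (le_of_lt hξ.1), le_trans (le_of_lt hξ.2) ha.2⟩
    have he' : F (a + t) - F a = deriv F ξ * t := by nlinarith [he]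
    rw [he']
    nlinarith [hκ ξ hξm]
  · simp [h]
  · have hlt : a < a + t := by linarith
    obtain ⟨ξ, hξ, he⟩ := slope_eq hF hlt
    have hξm : ξ ∈ Set.Icc (-1:ℝ) 2 :=
      ⟨le_trans ha.1 (le_of_lt hξ.1), le_trans (le_of_lt hξ.2) hat.2⟩
    have he' : F (a + t) - F a = deriv F ξ * t := by simpa using he
    rw [he']
    nlinarith [hκ ξ hξm]

private lemma contDiff_one_deriv_of_two {f : ℝ → ℝ} (hf : ContDiff ℝ 2 f) :
    ContDiff ℝ 1 (deriv f) := by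
  have h2 := ContDiff.iterate_deriv' (𝕜 := ℝ) 1 1 (f := f) (by exact_mod_cast hf)
  simpa using h2

private lemma second_deriv_nonpos_of_isLocalMax {f : ℝ → ℝ} (hf : ContDiff ℝ 2 f)
    {x : ℝ} (h : IsLocalMax f x) : deriv (deriv f) x ≤ 0 := by
  by_contra hpos
  push_neg at hpos
  have hd1 : Differentiable ℝ f := hf.differentiable (by norm_num)
  have hcd1 : ContDiff ℝ 1 (deriv f) := contDiff_one_deriv_of_two hf
  have hc2 : Continuous (deriv (deriv f)) := hcd1.continuous_deriv le_rfl
  have h0 : deriv f x = 0 := h.deriv_eq_zero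
  have hev : ∀ᶠ y in nhds x, 0 < deriv (deriv f) y :=
    (isOpen_lt continuous_const hc2).eventually_mem hpos
  obtain ⟨ε₁, hε₁, hb1⟩ := Metric.eventually_nhds_iff.mp hev
  obtain ⟨ε₂, hε₂, hb2⟩ := Metric.eventually_nhds_iff.mp h
  set δ := min ε₁ ε₂ / 2 with hδ
  have hδ1 : δ < ε₁ := by
    have := min_le_left ε₁ ε₂; have := lt_min hε₁ hε₂; simp only [hδ]; linarith
  have hδ2 : δ < ε₂ := by
    have := min_le_right ε₁ ε₂; have := lt_min hε₁ hε₂; simp only [hδ]; linarith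
  have hδpos : 0 < δ := by
    have := lt_min hε₁ hε₂; simp only [hδ]; linarith
  have hmono1 : StrictMonoOn (deriv f) (Set.Icc x (x + δ)) := by
    apply strictMonoOn_of_deriv_pos (convex_Icc _ _) (hcd1.continuous.continuousOn)
    intro y hy
    rw [interior_Icc] at hy
    apply hb1
    rw [Real.dist_eq, abs_of_pos (by linarith [hy.1] : (0:ℝ) < y - x)]
    linarith [hy.2]
  have hpos' : ∀ y ∈ Set.Ioo x (x + δ), 0 < deriv f y := by
    intro y hy
    have := hmono1 (Set.left_mem_Icc.mpr (by linarith))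
      ⟨le_of_lt hy.1, le_of_lt hy.2⟩ hy.1
    rwa [h0] at this
  have hmono2 : StrictMonoOn f (Set.Icc x (x + δ)) := by
    apply strictMonoOn_of_deriv_pos (convex_Icc _ _) (hd1.continuous.continuousOn)
    intro y hy
    rw [interior_Icc] at hy
    exact hpos' y hy
  have hlt : f x < f (x + δ) :=
    hmono2 (Set.left_mem_Icc.mpr (by linarith)) (Set.right_mem_Icc.mpr (by linarith))
      (by linarith)
  have hle : f (x + δ) ≤ f x := by
    apply hb2
    rw [Real.dist_eq]
    rw [abs_of_pos (by linarith : (0:ℝ) < x + δ - x)]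
    linarith
  linarith

set_option maxHeartbeats 4000000 in
theorem elliptic_H3_estimate
    (ne : ℝ → ℝ) (hne : ContDiff ℝ 2 ne) (hne0 : ne 0 = 1)
    (hne1 : deriv ne 0 = -1) (hne' : ∀ s, deriv ne s < 0) :
    ∃ δ₀ > 0, ∃ C > 0, ∀ (Φb : ℝ) (Φs n φ : ℝ → ℝ),
      0 < Φb → ContDiff ℝ 1 Φs →
      (∀ x ≥ (0:ℝ), 0 ≤ Φs x ∧ Φs x ≤ Φb ∧ |deriv Φs x| ≤ Φb) →
      ContDiff ℝ 1 n →
      Integrable (fun x => (n x)^2) (volume.restrict (Set.Ioi 0)) →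
      Integrable (fun x => (deriv n x)^2) (volume.restrict (Set.Ioi 0)) →
      ContDiff ℝ 2 φ →
      (∀ x > (0:ℝ), deriv (deriv φ) x = n x - (ne (Φs x + φ x) - ne (Φs x))) →
      φ 0 = 0 → Tendsto φ atTop (nhds 0) →
      Integrable (fun x => (φ x)^2) (volume.restrict (Set.Ioi 0)) →
      Integrable (fun x => (deriv φ x)^2) (volume.restrict (Set.Ioi 0)) →
      Φb + Real.sqrt (∫ x in Set.Ioi (0:ℝ), ((n x)^2 + (deriv n x)^2)) ≤ δ₀ →
      (∀ x > (0:ℝ), DifferentiableAt ℝ (deriv (deriv φ)) x) ∧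
      (∫⁻ x in Set.Ioi (0:ℝ), ENNReal.ofReal
          ((φ x)^2 + (deriv φ x)^2 + (deriv^[2] φ x)^2 + (deriv^[3] φ x)^2))
        ≤ ENNReal.ofReal (C * ∫ x in Set.Ioi (0:ℝ), ((n x)^2 + (deriv n x)^2)) := by
  have hne_d : Differentiable ℝ ne := hne.differentiable (by norm_num)
  have hne_cd1 : ContDiff ℝ 1 (deriv ne) := contDiff_one_deriv_of_two hne
  have hne_d1 : Differentiable ℝ (deriv ne) := hne_cd1.differentiable one_ne_zero
  have hne_c1 : Continuous (deriv ne) := hne_cd1.continuous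
  have hne_c2 : Continuous (deriv (deriv ne)) := hne_cd1.continuous_deriv le_rfl
  -- κ₁ : positive lower bound for -(deriv ne) on [-1,2]
  obtain ⟨s₀, hs₀m, hs₀⟩ := (isCompact_Icc (a := (-1:ℝ)) (b := 2)).exists_isMaxOn
    (Set.nonempty_Icc.mpr (by norm_num)) hne_c1.continuousOn
  set κ₁ : ℝ := -(deriv ne s₀) with hκ₁def
  have hκ₁pos : 0 < κ₁ := by simp [hκ₁def]; exact hne' s₀
  have hκ₁ : ∀ s ∈ Set.Icc (-1:ℝ) 2, deriv ne s ≤ -κ₁ := by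
    intro s hs; simpa [hκ₁def] using hs₀ hs
  -- L₁ : upper bound for |deriv ne| on [-1,2]
  obtain ⟨s₁, hs₁m, hs₁⟩ := (isCompact_Icc (a := (-1:ℝ)) (b := 2)).exists_isMaxOn
    (Set.nonempty_Icc.mpr (by norm_num)) (continuous_abs.comp hne_c1).continuousOn
  set L₁ : ℝ := |deriv ne s₁| with hL₁def
  have hL₁nn : 0 ≤ L₁ := abs_nonneg _
  have hL₁ : ∀ s ∈ Set.Icc (-1:ℝ) 2, |deriv ne s| ≤ L₁ := fun s hs => hs₁ hs
  -- L₂ : upper bound for |deriv (deriv ne)| on [-1,2]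
  obtain ⟨s₂, hs₂m, hs₂⟩ := (isCompact_Icc (a := (-1:ℝ)) (b := 2)).exists_isMaxOn
    (Set.nonempty_Icc.mpr (by norm_num)) (continuous_abs.comp hne_c2).continuousOn
  set L₂ : ℝ := |deriv (deriv ne) s₂| with hL₂def
  have hL₂nn : 0 ≤ L₂ := abs_nonneg _
  have hL₂ : ∀ s ∈ Set.Icc (-1:ℝ) 2, |deriv (deriv ne) s| ≤ L₂ := fun s hs => hs₂ hs
  refine ⟨min 1 (κ₁/2), by positivity,
    (1+2*L₁^2+3*L₂^2)/κ₁^2 + (1+3*L₁^2)/(2*κ₁) + 3, by positivity, ?_⟩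
  set δ₀ : ℝ := min 1 (κ₁/2) with hδ₀def
  set C : ℝ := (1+2*L₁^2+3*L₂^2)/κ₁^2 + (1+3*L₁^2)/(2*κ₁) + 3 with hCdef
  have hδ₀1 : δ₀ ≤ 1 := min_le_left _ _
  have hδ₀κ : δ₀ ≤ κ₁/2 := min_le_right _ _
  have hδ₀pos : 0 < δ₀ := by positivity
  intro Φb Φs n φ hΦb hΦs hΦsb hn hn2 hdn2 hφ heq hφ0 hφtop hφ2 hdφ2 hsmall
  set I : ℝ := ∫ x in Set.Ioi (0:ℝ), ((n x)^2 + (deriv n x)^2) with hIdef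
  have hIint : Integrable (fun x => (n x)^2 + (deriv n x)^2)
      (volume.restrict (Set.Ioi 0)) := hn2.add hdn2
  have hInn : 0 ≤ I := integral_nonneg (fun x => by positivity)
  have hsqrtI : Real.sqrt I ≤ δ₀ := by linarith
  have hΦbδ : Φb ≤ δ₀ := by linarith [Real.sqrt_nonneg I]
  have hΦb1 : Φb ≤ 1 := le_trans hΦbδ hδ₀1
  -- continuity / differentiability package
  have hn_d : Differentiable ℝ n := hn.differentiable one_ne_zero
  have hn_c : Continuous n := hn.continuous
  have hdn_c : Continuous (deriv n) := hn.continuous_deriv le_rfl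
  have hφ_d : Differentiable ℝ φ := hφ.differentiable (by norm_num)
  have hφ_c : Continuous φ := hφ.continuous
  have hφ_cd1 : ContDiff ℝ 1 (deriv φ) := contDiff_one_deriv_of_two hφ
  have hdφ_d : Differentiable ℝ (deriv φ) := hφ_cd1.differentiable one_ne_zero
  have hdφ_c : Continuous (deriv φ) := hφ_cd1.continuous
  have hddφ_c : Continuous (deriv (deriv φ)) := hφ_cd1.continuous_deriv le_rfl
  have hΦs_d : Differentiable ℝ Φs := hΦs.differentiable one_ne_zero
  have hΦs_c : Continuous Φs := hΦs.continuous
  -- Part A : sup bound on n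
  have hnsup : ∀ x ≥ (0:ℝ), (n x)^2 ≤ I := by
    intro x hx
    set G : ℝ → ℝ := fun y => 2 * n y * deriv n y with hGdef
    have hG_c : Continuous G := (continuous_const.mul hn_c).mul hdn_c
    have hGle : ∀ y, |G y| ≤ (n y)^2 + (deriv n y)^2 := by
      intro y
      have h1 : |G y| = 2 * (|n y| * |deriv n y|) := by
        simp [hGdef, abs_mul]; ring
      nlinarith [sq_abs (n y), sq_abs (deriv n y), sq_nonneg (|n y| - |deriv n y|)]
    have hGint : IntegrableOn G (Set.Ioi 0) volume := by
      refine Integrable.mono hIint hG_c.aestronglyMeasurable ?_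
      refine ae_restrict_of_forall_mem measurableSet_Ioi (fun y _ => ?_)
      have := hGle y
      have hnn : (0:ℝ) ≤ (n y)^2 + (deriv n y)^2 := by positivity
      simpa [Real.norm_eq_abs, abs_of_nonneg hnn] using this
    have hGx : IntegrableOn G (Set.Ioi x) volume := hGint.mono_set (Set.Ioi_subset_Ioi hx)
    have hFTC : ∀ R, x ≤ R → ∫ t in x..R, G t = (n R)^2 - (n x)^2 := by
      intro R hR
      apply intervalIntegral.integral_eq_sub_of_hasDerivAt
      · intro t _
        have h := ((hn_d t).hasDerivAt).fun_pow 2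
        simpa [hGdef] using h
      · exact hG_c.intervalIntegrable x R
    have htend1 : Tendsto (fun R => ∫ t in x..R, G t) atTop
        (nhds (∫ t in Set.Ioi x, G t)) :=
      intervalIntegral_tendsto_integral_Ioi x hGx tendsto_id
    have htend2 : Tendsto (fun R => (n R)^2) atTop
        (nhds ((∫ t in Set.Ioi x, G t) + (n x)^2)) := by
      refine (htend1.add tendsto_const_nhds).congr' ?_
      filter_upwards [eventually_ge_atTop x] with R hR
      rw [hFTC R hR]; ring
    have hzero : (∫ t in Set.Ioi x, G t) + (n x)^2 = 0 :=
      limit_zero_of_integrable hn2 htend2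
    have habs : |∫ t in Set.Ioi x, G t| ≤ ∫ t in Set.Ioi x, ((n t)^2 + (deriv n t)^2) := by
      calc |∫ t in Set.Ioi x, G t| ≤ ∫ t in Set.Ioi x, |G t| := by
            simpa [Real.norm_eq_abs] using
              norm_integral_le_integral_norm (μ := volume.restrict (Set.Ioi x)) G
        _ ≤ ∫ t in Set.Ioi x, ((n t)^2 + (deriv n t)^2) :=
            integral_mono hGx.abs (IntegrableOn.mono_set hIint (Set.Ioi_subset_Ioi hx)) (fun t => hGle t)
    have hsubI : ∫ t in Set.Ioi x, ((n t)^2 + (deriv n t)^2) ≤ I := by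
      refine setIntegral_mono_set hIint ?_ (HasSubset.Subset.eventuallyLE (Set.Ioi_subset_Ioi hx))
      exact ae_restrict_of_forall_mem measurableSet_Ioi (fun y _ => by positivity)
    have h2 : (n x)^2 = -(∫ t in Set.Ioi x, G t) := by linarith
    calc (n x)^2 = -(∫ t in Set.Ioi x, G t) := h2
      _ ≤ |∫ t in Set.Ioi x, G t| := neg_le_abs _
      _ ≤ _ := habs
      _ ≤ I := hsubI
  have hn_abs : ∀ x ≥ (0:ℝ), |n x| ≤ δ₀ := by
    intro x hx
    rw [← Real.sqrt_sq_eq_abs]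
    exact le_trans (Real.sqrt_le_sqrt (hnsup x hx)) hsqrtI
  have hΦs1 : ∀ x ≥ (0:ℝ), 0 ≤ Φs x ∧ Φs x ≤ 1 := fun x hx =>
    ⟨(hΦsb x hx).1, le_trans (hΦsb x hx).2.1 hΦb1⟩
  have hΦsmem : ∀ x ≥ (0:ℝ), Φs x ∈ Set.Icc (-1:ℝ) 2 := fun x hx =>
    ⟨by linarith [(hΦs1 x hx).1], by linarith [(hΦs1 x hx).2]⟩
  have hanti : StrictAnti ne := strictAnti_of_deriv_neg hne'
  -- Part B : maximum principle, |φ| ≤ 1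
  have hφ_bound : ∀ x ≥ (0:ℝ), |φ x| ≤ 1 := by
    by_contra hcon
    push_neg at hcon
    obtain ⟨x₀, hx₀0, hx₀⟩ := hcon
    have hev : ∀ᶠ x in atTop, |φ x| < 1/2 := by
      filter_upwards [hφtop.eventually
        (Metric.ball_mem_nhds 0 (by norm_num : (0:ℝ) < 1/2))] with x hx
      simpa [Real.dist_eq] using hx
    obtain ⟨R₀, hR₀⟩ := hev.exists_forall_of_atTop
    set R := max R₀ (x₀ + 1) with hRdef
    have hRx₀ : x₀ < R := lt_of_lt_of_le (by linarith) (le_max_right _ _)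
    have hR0 : (0:ℝ) < R := lt_of_le_of_lt hx₀0 hRx₀
    have hφR : |φ R| < 1/2 := hR₀ R (le_max_left _ _)
    obtain ⟨x₁, hx₁m, hx₁max⟩ := (isCompact_Icc (a := (0:ℝ)) (b := R)).exists_isMaxOn
      (Set.nonempty_Icc.mpr (le_of_lt hR0)) (continuous_abs.comp hφ_c).continuousOn
    have hM : 1 < |φ x₁| := lt_of_lt_of_le hx₀ (hx₁max ⟨hx₀0, le_of_lt hRx₀⟩)
    have hx₁0 : 0 < x₁ := by
      rcases lt_or_eq_of_le hx₁m.1 with h | h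
      · exact h
      · exfalso; rw [← h, hφ0] at hM; norm_num at hM
    have hx₁R : x₁ < R := by
      rcases lt_or_eq_of_le hx₁m.2 with h | h
      · exact h
      · exfalso; rw [h] at hM; linarith
    have hIoo : ∀ᶠ y in nhds x₁, y ∈ Set.Ioo (0:ℝ) R :=
      (isOpen_Ioo).eventually_mem ⟨hx₁0, hx₁R⟩
    set a := Φs x₁ with hadef
    have ham : a ∈ Set.Icc (-1:ℝ) 2 := hΦsmem x₁ (le_of_lt hx₁0)
    have ha0 : 0 ≤ a := (hΦs1 x₁ (le_of_lt hx₁0)).1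
    have ha1 : a ≤ 1 := (hΦs1 x₁ (le_of_lt hx₁0)).2
    have hnx₁ : |n x₁| ≤ δ₀ := hn_abs x₁ (le_of_lt hx₁0)
    have heq₁ := heq x₁ hx₁0
    rcases lt_trichotomy (φ x₁) 0 with hsgn | hsgn | hsgn
    · -- negative minimum
      have hmin : IsLocalMin φ x₁ := by
        filter_upwards [hIoo] with y hy
        have h1 : |φ y| ≤ |φ x₁| := hx₁max ⟨le_of_lt hy.1, le_of_lt hy.2⟩
        have h2 : |φ x₁| = -(φ x₁) := abs_of_neg hsgn
        have h3 : -(|φ y|) ≤ φ y := neg_abs_le _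
        linarith
      have hsec : 0 ≤ deriv (deriv φ) x₁ := by
        have h1 : IsLocalMax (fun y => -φ y) x₁ := hmin.neg
        have h2 := second_deriv_nonpos_of_isLocalMax hφ.neg h1
        have h3 : deriv (fun y => -φ y) = fun y => -(deriv φ y) := by
          funext y; exact deriv.neg
        rw [h3] at h2
        have h4 : deriv (fun y => -(deriv φ y)) x₁ = -(deriv (deriv φ) x₁) := deriv.neg
        rw [h4] at h2; linarith
      have hb1 : φ x₁ ≤ -1 := by
        have := abs_of_neg hsgn; linarith
      have h5 : ne (a + -1) ≤ ne (a + φ x₁) := by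
        apply hanti.antitone; linarith
      have h6 : (ne (a + (-1)) - ne a) * (-1) ≤ -κ₁ * (-1)^2 :=
        mvt_lower hne_d hκ₁ ham ⟨by linarith, by linarith⟩
      have h7 : n x₁ ≥ κ₁ := by nlinarith [heq₁, hsec, h5, h6]
      have h8 : n x₁ ≤ δ₀ := le_trans (le_abs_self _) hnx₁
      linarith
    · rw [hsgn] at hM; norm_num at hM
    · -- positive maximum
      have hmax : IsLocalMax φ x₁ := by
        filter_upwards [hIoo] with y hy
        have h1 : |φ y| ≤ |φ x₁| := hx₁max ⟨le_of_lt hy.1, le_of_lt hy.2⟩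
        have h2 : |φ x₁| = φ x₁ := abs_of_pos hsgn
        linarith [le_abs_self (φ y)]
      have hsec : deriv (deriv φ) x₁ ≤ 0 := second_deriv_nonpos_of_isLocalMax hφ hmax
      have hb1 : 1 ≤ φ x₁ := by
        have := abs_of_pos hsgn; linarith
      have h5 : ne (a + φ x₁) ≤ ne (a + 1) := by
        apply hanti.antitone; linarith
      have h6 : (ne (a + 1) - ne a) * 1 ≤ -κ₁ * 1^2 :=
        mvt_lower hne_d hκ₁ ham ⟨by linarith, by linarith⟩
      have h7 : n x₁ ≤ -κ₁ := by nlinarith [heq₁, hsec, h5, h6]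
      have h8 : -δ₀ ≤ n x₁ := by linarith [neg_abs_le (n x₁), hnx₁]
      linarith
  -- Part C : pointwise MVT bounds
  set g : ℝ → ℝ := fun x => ne (Φs x + φ x) - ne (Φs x) with hgdef
  have hg_c : Continuous g :=
    (hne_d.continuous.comp (hΦs_c.add hφ_c)).sub (hne_d.continuous.comp hΦs_c)
  have hargmem : ∀ x ≥ (0:ℝ), Φs x + φ x ∈ Set.Icc (-1:ℝ) 2 := by
    intro x hx
    have h1 := hφ_bound x hx
    have h2 := hΦs1 x hx
    have h3 := neg_abs_le (φ x)
    have h4 := le_abs_self (φ x)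
    exact ⟨by linarith, by linarith⟩
  have hcoer : ∀ x ≥ (0:ℝ), g x * φ x ≤ -κ₁ * (φ x)^2 := by
    intro x hx
    have h := mvt_lower hne_d hκ₁ (hΦsmem x hx) (hargmem x hx)
    simpa [hgdef] using h
  have hg_abs : ∀ x ≥ (0:ℝ), |g x| ≤ L₁ * |φ x| := by
    intro x hx
    have h := mvt_abs hne_d hL₁ (hΦsmem x hx) (hargmem x hx)
    simpa [hgdef, add_sub_cancel_left] using h
  have hg'_abs : ∀ x ≥ (0:ℝ), |deriv ne (Φs x + φ x) - deriv ne (Φs x)| ≤ L₂ * |φ x| := by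
    intro x hx
    have h := mvt_abs hne_d1 hL₂ (hΦsmem x hx) (hargmem x hx)
    simpa [add_sub_cancel_left] using h
  -- Part D : integrability of products
  have hnφ_int : Integrable (fun x => n x * φ x) (volume.restrict (Set.Ioi 0)) := by
    refine Integrable.mono (hn2.add hφ2) ((hn_c.mul hφ_c).aestronglyMeasurable) ?_
    refine ae_restrict_of_forall_mem measurableSet_Ioi (fun y _ => ?_)
    have h1 : |n y * φ y| ≤ n y^2 + φ y^2 := by
      nlinarith [abs_mul (n y) (φ y), sq_abs (n y), sq_abs (φ y),
        sq_nonneg (|n y| - |φ y|)]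
    simp only [Real.norm_eq_abs]
    exact le_trans h1 (le_abs_self _)
  have hgφ_int : Integrable (fun x => g x * φ x) (volume.restrict (Set.Ioi 0)) := by
    refine Integrable.mono (hφ2.const_mul L₁) ((hg_c.mul hφ_c).aestronglyMeasurable) ?_
    refine ae_restrict_of_forall_mem measurableSet_Ioi (fun y hy => ?_)
    have h1 := hg_abs y (le_of_lt hy)
    rw [Real.norm_eq_abs, Real.norm_eq_abs, abs_mul]
    have h3 : |g y| * |φ y| ≤ L₁ * φ y ^2 := by
      nlinarith [abs_nonneg (φ y), sq_abs (φ y)]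
    exact le_trans h3 (le_abs_self _)
  -- Part E : energy identity
  have hP' : ∀ x : ℝ, HasDerivAt (fun y => φ y * deriv φ y)
      ((deriv φ x)^2 + φ x * deriv (deriv φ) x) x := by
    intro x
    have h : HasDerivAt (fun y => φ y * deriv φ y)
        (deriv φ x * deriv φ x + φ x * deriv (deriv φ) x) x :=
      ((hφ_d x).hasDerivAt).fun_mul ((hdφ_d x).hasDerivAt)
    convert h using 1; ring
  set Ht : ℝ → ℝ := fun x => (deriv φ x)^2 + (n x * φ x - g x * φ x) with hHtdef
  have hHt_int : Integrable Ht (volume.restrict (Set.Ioi 0)) :=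
    hdφ2.add (hnφ_int.sub hgφ_int)
  have hXY0 : (∫ x in Set.Ioi (0:ℝ), Ht x) = 0 := by
    have hFTC : ∀ R ≥ (0:ℝ), ∫ t in (0:ℝ)..R, Ht t = φ R * deriv φ R := by
      intro R hR
      have h1 : ∫ t in (0:ℝ)..R, ((deriv φ t)^2 + φ t * deriv (deriv φ) t)
          = φ R * deriv φ R - φ 0 * deriv φ 0 :=
        intervalIntegral.integral_eq_sub_of_hasDerivAt (fun t _ => hP' t)
          (((hdφ_c.pow 2).add (hφ_c.mul hddφ_c)).intervalIntegrable 0 R)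
      have h2 : ∫ t in (0:ℝ)..R, Ht t
          = ∫ t in (0:ℝ)..R, ((deriv φ t)^2 + φ t * deriv (deriv φ) t) := by
        rw [intervalIntegral.integral_of_le hR, intervalIntegral.integral_of_le hR]
        apply setIntegral_congr_fun measurableSet_Ioc
        intro t ht
        have h3 := heq t ht.1
        simp only [hHtdef, hgdef]
        rw [h3]; ring
      rw [h2, h1, hφ0]; ring
    have htend1 : Tendsto (fun R => ∫ t in (0:ℝ)..R, Ht t) atTop
        (nhds (∫ x in Set.Ioi (0:ℝ), Ht x)) :=
      intervalIntegral_tendsto_integral_Ioi 0 hHt_int tendsto_id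
    have htend2 : Tendsto (fun R => φ R * deriv φ R) atTop
        (nhds (∫ x in Set.Ioi (0:ℝ), Ht x)) := by
      refine htend1.congr' ?_
      filter_upwards [eventually_ge_atTop (0:ℝ)] with R hR
      exact hFTC R hR
    have hPint : Integrable (fun x => φ x * deriv φ x) (volume.restrict (Set.Ioi 0)) := by
      refine Integrable.mono (hφ2.add hdφ2) ((hφ_c.mul hdφ_c).aestronglyMeasurable) ?_
      refine ae_restrict_of_forall_mem measurableSet_Ioi (fun y _ => ?_)
      have h1 : |φ y * deriv φ y| ≤ φ y^2 + deriv φ y^2 := by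
        nlinarith [abs_mul (φ y) (deriv φ y), sq_abs (φ y), sq_abs (deriv φ y),
          sq_nonneg (|φ y| - |deriv φ y|)]
      simp only [Real.norm_eq_abs]
      exact le_trans h1 (le_abs_self _)
    exact limit_zero_of_integrable hPint htend2
  have hsub_int : Integrable (fun x => n x * φ x - g x * φ x)
      (volume.restrict (Set.Ioi 0)) := hnφ_int.sub hgφ_int
  have hsplit : (∫ x in Set.Ioi (0:ℝ), (deriv φ x)^2)
      + ((∫ x in Set.Ioi (0:ℝ), n x * φ x) - ∫ x in Set.Ioi (0:ℝ), g x * φ x) = 0 := by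
    rw [← integral_sub hnφ_int hgφ_int, ← integral_add hdφ2 hsub_int]
    exact hXY0
  set X : ℝ := ∫ x in Set.Ioi (0:ℝ), (φ x)^2 with hXdef
  set Y : ℝ := ∫ x in Set.Ioi (0:ℝ), (deriv φ x)^2 with hYdef
  set E : ℝ := ∫ x in Set.Ioi (0:ℝ), (n x)^2 with hEdef
  have hXnn : 0 ≤ X := integral_nonneg (fun x => sq_nonneg _)
  have hYnn : 0 ≤ Y := integral_nonneg (fun x => sq_nonneg _)
  have hEnn : 0 ≤ E := integral_nonneg (fun x => sq_nonneg _)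
  have hcoerI : (∫ x in Set.Ioi (0:ℝ), g x * φ x) ≤ -κ₁ * X := by
    have h1 : (∫ x in Set.Ioi (0:ℝ), g x * φ x)
        ≤ ∫ x in Set.Ioi (0:ℝ), -κ₁ * (φ x)^2 :=
      integral_mono_ae hgφ_int (hφ2.const_mul _)
        (ae_restrict_of_forall_mem measurableSet_Ioi (fun x hx => hcoer x (le_of_lt hx)))
    rwa [integral_const_mul] at h1
  have hnφI : -(∫ x in Set.Ioi (0:ℝ), n x * φ x) ≤ (1/(2*κ₁)) * E + (κ₁/2) * X := by
    have key : ∀ A B : ℝ, -(A*B) ≤ 1/(2*κ₁)*A^2 + κ₁/2*B^2 := by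
      intro A B
      have h3 : (0:ℝ) < 2*κ₁ := by linarith
      have h4 : 1/(2*κ₁)*A^2 + κ₁/2*B^2 - (-(A*B)) = (A + κ₁*B)^2 / (2*κ₁) := by
        field_simp; ring
      linarith [div_nonneg (sq_nonneg (A + κ₁*B)) (le_of_lt h3), h4]
    have h1 : (∫ x in Set.Ioi (0:ℝ), -(n x * φ x))
        ≤ ∫ x in Set.Ioi (0:ℝ), (1/(2*κ₁) * (n x)^2 + κ₁/2 * (φ x)^2) := by
      apply integral_mono hnφ_int.neg ((hn2.const_mul _).add (hφ2.const_mul _))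
      intro x
      exact key (n x) (φ x)
    rw [integral_neg, integral_add (hn2.const_mul _) (hφ2.const_mul _),
      integral_const_mul, integral_const_mul] at h1
    exact h1
  have hYX1 : Y + (κ₁/2) * X ≤ (1/(2*κ₁)) * E := by nlinarith [hsplit, hcoerI, hnφI]
  have hkXnn : 0 ≤ (κ₁/2) * X := mul_nonneg (by linarith) hXnn
  have hY : Y ≤ 1/(2*κ₁) * E := by linarith
  have hX : X ≤ 1/κ₁^2 * E := by
    have h2 : (κ₁/2)*X ≤ (1/(2*κ₁))*E := by linarith
    calc X = (2/κ₁) * ((κ₁/2)*X) := by field_simp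
      _ ≤ (2/κ₁) * ((1/(2*κ₁))*E) := by
          apply mul_le_mul_of_nonneg_left h2 (by positivity)
      _ = 1/κ₁^2 * E := by field_simp
  have hn2I : E ≤ I := by
    rw [hEdef, hIdef]
    exact integral_mono hn2 hIint (fun x => by nlinarith [sq_nonneg (deriv n x)])
  have hdn2I : (∫ x in Set.Ioi (0:ℝ), (deriv n x)^2) ≤ I := by
    rw [hIdef]
    exact integral_mono hdn2 hIint (fun x => by nlinarith [sq_nonneg (n x)])
  -- Part F : third derivative and conclusion
  have hD3 : ∀ x : ℝ, HasDerivAt (fun y => n y - (ne (Φs y + φ y) - ne (Φs y)))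
      (deriv n x - ((deriv ne (Φs x + φ x)) * (deriv Φs x + deriv φ x)
        - (deriv ne (Φs x)) * deriv Φs x)) x := by
    intro x
    have h1 : HasDerivAt (fun y => ne (Φs y + φ y))
        ((deriv ne (Φs x + φ x)) * (deriv Φs x + deriv φ x)) x :=
      (hne_d (Φs x + φ x)).hasDerivAt.comp x (((hΦs_d x).hasDerivAt).add ((hφ_d x).hasDerivAt))
    have h2 : HasDerivAt (fun y => ne (Φs y))
        ((deriv ne (Φs x)) * deriv Φs x) x :=
      (hne_d (Φs x)).hasDerivAt.comp x ((hΦs_d x).hasDerivAt)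
    exact ((hn_d x).hasDerivAt).sub (h1.sub h2)
  have hevq : ∀ x > (0:ℝ), deriv (deriv φ) =ᶠ[nhds x]
      (fun y => n y - (ne (Φs y + φ y) - ne (Φs y))) := by
    intro x hx
    filter_upwards [isOpen_Ioi.eventually_mem hx] with y hy
    exact heq y hy
  have hdiff3 : ∀ x > (0:ℝ), DifferentiableAt ℝ (deriv (deriv φ)) x := by
    intro x hx
    exact (hD3 x).differentiableAt.congr_of_eventuallyEq (hevq x hx)
  refine ⟨hdiff3, ?_⟩
  have h2eq : ∀ x > (0:ℝ), deriv^[2] φ x = n x - g x := by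
    intro x hx
    have h1 : deriv^[2] φ x = deriv (deriv φ) x := rfl
    rw [h1, heq x hx]
  have h3eq : ∀ x > (0:ℝ), deriv^[3] φ x
      = deriv n x - ((deriv ne (Φs x + φ x)) * (deriv Φs x + deriv φ x)
        - (deriv ne (Φs x)) * deriv Φs x) := by
    intro x hx
    have h1 : deriv^[3] φ x = deriv (deriv (deriv φ)) x := rfl
    rw [h1, Filter.EventuallyEq.deriv_eq (hevq x hx)]
    exact (hD3 x).deriv
  have hb2 : ∀ x > (0:ℝ), (deriv^[2] φ x)^2 ≤ 2*(n x)^2 + 2*L₁^2*(φ x)^2 := by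
    intro x hx
    rw [h2eq x hx]
    have hga := hg_abs x (le_of_lt hx)
    have hg2 : (g x)^2 ≤ L₁^2 * (φ x)^2 := by
      have h := pow_le_pow_left₀ (abs_nonneg (g x)) hga 2
      calc (g x)^2 = |g x|^2 := (sq_abs _).symm
        _ ≤ (L₁ * |φ x|)^2 := h
        _ = L₁^2 * (φ x)^2 := by simp [mul_pow, sq_abs]
    nlinarith [hg2, sq_nonneg (n x + g x)]
  have hb3 : ∀ x > (0:ℝ), (deriv^[3] φ x)^2
      ≤ 3*(deriv n x)^2 + 3*L₂^2*(φ x)^2 + 3*L₁^2*(deriv φ x)^2 := by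
    intro x hx
    have hx0 : (0:ℝ) ≤ x := le_of_lt hx
    rw [h3eq x hx]
    obtain ⟨T1, hT1def⟩ : ∃ t : ℝ, t = (deriv ne (Φs x + φ x) - deriv ne (Φs x)) * deriv Φs x :=
      ⟨_, rfl⟩
    obtain ⟨T2, hT2def⟩ : ∃ t : ℝ, t = (deriv ne (Φs x + φ x)) * deriv φ x := ⟨_, rfl⟩
    have hΦ' : |deriv Φs x| ≤ 1 := le_trans (hΦsb x hx0).2.2 hΦb1
    have hne1b : |deriv ne (Φs x + φ x)| ≤ L₁ := hL₁ _ (hargmem x hx0)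
    have h1 := hg'_abs x hx0
    have hT1b : |T1| ≤ L₂ * |φ x| := by
      rw [hT1def, abs_mul]
      calc |deriv ne (Φs x + φ x) - deriv ne (Φs x)| * |deriv Φs x|
          ≤ (L₂ * |φ x|) * 1 := by
            apply mul_le_mul h1 hΦ' (abs_nonneg _)
            positivity
        _ = L₂ * |φ x| := by ring
    have hT2b : |T2| ≤ L₁ * |deriv φ x| := by
      rw [hT2def, abs_mul]
      exact mul_le_mul_of_nonneg_right hne1b (abs_nonneg _)
    have hs1 : T1^2 ≤ L₂^2 * (φ x)^2 := by
      have h := pow_le_pow_left₀ (abs_nonneg T1) hT1b 2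
      calc T1^2 = |T1|^2 := (sq_abs _).symm
        _ ≤ (L₂ * |φ x|)^2 := h
        _ = L₂^2 * (φ x)^2 := by simp [mul_pow, sq_abs]
    have hs2 : T2^2 ≤ L₁^2 * (deriv φ x)^2 := by
      have h := pow_le_pow_left₀ (abs_nonneg T2) hT2b 2
      calc T2^2 = |T2|^2 := (sq_abs _).symm
        _ ≤ (L₁ * |deriv φ x|)^2 := h
        _ = L₁^2 * (deriv φ x)^2 := by simp [mul_pow, sq_abs]
    have hexp : deriv ne (Φs x + φ x) * (deriv Φs x + deriv φ x)
        - deriv ne (Φs x) * deriv Φs x = T1 + T2 := by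
      rw [hT1def, hT2def]; ring
    rw [hexp]
    nlinarith only [hs1, hs2, sq_nonneg (deriv n x + T1), sq_nonneg (deriv n x + T2),
      sq_nonneg (T1 - T2)]
  set B : ℝ → ℝ := fun x => (1+2*L₁^2+3*L₂^2) * (φ x)^2 + (1+3*L₁^2) * (deriv φ x)^2
      + 2 * (n x)^2 + 3 * (deriv n x)^2 with hBdef
  have hBint : Integrable B (volume.restrict (Set.Ioi 0)) :=
    (((hφ2.const_mul _).add (hdφ2.const_mul _)).add (hn2.const_mul _)).add (hdn2.const_mul _)
  have hBnn : ∀ x, 0 ≤ B x := by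
    intro x
    simp only [hBdef]
    have h1 : (0:ℝ) ≤ L₁^2 * (φ x)^2 := mul_nonneg (sq_nonneg _) (sq_nonneg _)
    have h2 : (0:ℝ) ≤ L₂^2 * (φ x)^2 := mul_nonneg (sq_nonneg _) (sq_nonneg _)
    have h3 : (0:ℝ) ≤ L₁^2 * (deriv φ x)^2 := mul_nonneg (sq_nonneg _) (sq_nonneg _)
    nlinarith only [h1, h2, h3, sq_nonneg (φ x), sq_nonneg (deriv φ x), sq_nonneg (n x),
      sq_nonneg (deriv n x)]
  have hpt : ∀ x > (0:ℝ), (φ x)^2 + (deriv φ x)^2 + (deriv^[2] φ x)^2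
      + (deriv^[3] φ x)^2 ≤ B x := by
    intro x hx
    have hA := hb2 x hx
    have hB' := hb3 x hx
    simp only [hBdef]
    linarith [hA, hB']
  have hlint1 : (∫⁻ x in Set.Ioi (0:ℝ), ENNReal.ofReal
      ((φ x)^2 + (deriv φ x)^2 + (deriv^[2] φ x)^2 + (deriv^[3] φ x)^2))
      ≤ ∫⁻ x in Set.Ioi (0:ℝ), ENNReal.ofReal (B x) := by
    refine lintegral_mono_ae ?_
    refine ae_restrict_of_forall_mem measurableSet_Ioi (fun x hx => ?_)
    exact ENNReal.ofReal_le_ofReal (hpt x hx)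
  have hlint2 : (∫⁻ x in Set.Ioi (0:ℝ), ENNReal.ofReal (B x))
      = ENNReal.ofReal (∫ x in Set.Ioi (0:ℝ), B x) :=
    (ofReal_integral_eq_lintegral_ofReal hBint (ae_of_all _ (fun x => hBnn x))).symm
  have hFnn : 0 ≤ (∫ x in Set.Ioi (0:ℝ), (deriv n x)^2) :=
    integral_nonneg (fun x => sq_nonneg _)
  have hEsum : E + (∫ x in Set.Ioi (0:ℝ), (deriv n x)^2) = I := by
    rw [hEdef, hIdef, integral_add hn2 hdn2]
  have hBval : (∫ x in Set.Ioi (0:ℝ), B x)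
      = (1+2*L₁^2+3*L₂^2) * X + (1+3*L₁^2) * Y + 2 * E
        + 3 * (∫ x in Set.Ioi (0:ℝ), (deriv n x)^2) := by
    simp only [hBdef]
    have i1 : Integrable (fun x => (1+2*L₁^2+3*L₂^2) * (φ x)^2)
        (volume.restrict (Set.Ioi 0)) := hφ2.const_mul _
    have i2 : Integrable (fun x => (1+3*L₁^2) * (deriv φ x)^2)
        (volume.restrict (Set.Ioi 0)) := hdφ2.const_mul _
    have i3 : Integrable (fun x => 2 * (n x)^2)
        (volume.restrict (Set.Ioi 0)) := hn2.const_mul _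
    have i4 : Integrable (fun x => 3 * (deriv n x)^2)
        (volume.restrict (Set.Ioi 0)) := hdn2.const_mul _
    have i12 : Integrable (fun x => (1+2*L₁^2+3*L₂^2) * (φ x)^2
        + (1+3*L₁^2) * (deriv φ x)^2) (volume.restrict (Set.Ioi 0)) := i1.add i2
    have i123 : Integrable (fun x => (1+2*L₁^2+3*L₂^2) * (φ x)^2
        + (1+3*L₁^2) * (deriv φ x)^2 + 2 * (n x)^2)
        (volume.restrict (Set.Ioi 0)) := i12.add i3
    rw [integral_add i123 i4, integral_add i12 i3, integral_add i1 i2,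
      integral_const_mul, integral_const_mul, integral_const_mul, integral_const_mul,
      hXdef, hYdef, hEdef]
  have hfinal : (∫ x in Set.Ioi (0:ℝ), B x) ≤ C * I := by
    rw [hBval, hCdef]
    have hx1 : (1+2*L₁^2+3*L₂^2) * X ≤ (1+2*L₁^2+3*L₂^2) * (1/κ₁^2 * E) :=
      mul_le_mul_of_nonneg_left hX (by positivity)
    have hy1 : (1+3*L₁^2) * Y ≤ (1+3*L₁^2) * (1/(2*κ₁) * E) :=
      mul_le_mul_of_nonneg_left hY (by positivity)
    have h5 : (1+2*L₁^2+3*L₂^2) * (1/κ₁^2 * E) ≤ (1+2*L₁^2+3*L₂^2)/κ₁^2 * I := by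
      have h := mul_le_mul_of_nonneg_left hn2I
        (show (0:ℝ) ≤ (1+2*L₁^2+3*L₂^2)/κ₁^2 by positivity)
      calc (1+2*L₁^2+3*L₂^2) * (1/κ₁^2 * E) = (1+2*L₁^2+3*L₂^2)/κ₁^2 * E := by ring
        _ ≤ _ := h
    have h6 : (1+3*L₁^2) * (1/(2*κ₁) * E) ≤ (1+3*L₁^2)/(2*κ₁) * I := by
      have h := mul_le_mul_of_nonneg_left hn2I
        (show (0:ℝ) ≤ (1+3*L₁^2)/(2*κ₁) by positivity)
      calc (1+3*L₁^2) * (1/(2*κ₁) * E) = (1+3*L₁^2)/(2*κ₁) * E := by ring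
        _ ≤ _ := h
    have h7 : 2*E + 3*(∫ x in Set.Ioi (0:ℝ), (deriv n x)^2) ≤ 3*I := by
      linarith [hEnn, hEsum, hFnn]
    linarith [hx1, hy1, h5, h6, h7]
  calc (∫⁻ x in Set.Ioi (0:ℝ), ENNReal.ofReal
      ((φ x)^2 + (deriv φ x)^2 + (deriv^[2] φ x)^2 + (deriv^[3] φ x)^2))
      ≤ ∫⁻ x in Set.Ioi (0:ℝ), ENNReal.ofReal (B x) := hlint1
    _ = ENNReal.ofReal (∫ x in Set.Ioi (0:ℝ), B x) := hlint2
    _ ≤ ENNReal.ofReal (C * I) := ENNReal.ofReal_le_ofReal hfinal
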